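/- Let s > 0 and define d_s : ℝ² × ℝ² → ℝ by d_s(x,y) = (1/(2s))·√((√(s²+|x|²) + √(s²+|y|²))² − |x+y|²) − 1. Then for all x, y ∈ ℝ², d_s(x,y) ≥ 0, d_s(x,y) = d_s(y,x), and d_s(x,y) = 0 if and only if x = y. -/

import Mathlib

set_option maxHeartbeats 1000000

theorem stmt_7 (s : ℝ) (hs : 0 < s)
    (ds : EuclideanSpace ℝ (Fin 2) → EuclideanSpace ℝ (Fin 2) → ℝ)
    (hds : ∀ x y, ds x y = (1 / (2 * s)) *
      Real.sqrt ((Real.sqrt (s ^ 2 + ‖x‖ ^ 2) + Real.sqrt (s ^ 2 + ‖y‖ ^ 2)) ^ 2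
        - ‖x + y‖ ^ 2) - 1) :
    ∀ x y : EuclideanSpace ℝ (Fin 2),
      0 ≤ ds x y ∧ ds x y = ds y x ∧ (ds x y = 0 ↔ x = y) := by
  intro x y
  set a := Real.sqrt (s ^ 2 + ‖x‖ ^ 2) with ha
  set b := Real.sqrt (s ^ 2 + ‖y‖ ^ 2) with hb
  have ha0 : 0 ≤ a := Real.sqrt_nonneg _
  have hb0 : 0 ≤ b := Real.sqrt_nonneg _
  have ha2 : a ^ 2 = s ^ 2 + ‖x‖ ^ 2 := Real.sq_sqrt (by positivity)
  have hb2 : b ^ 2 = s ^ 2 + ‖y‖ ^ 2 := Real.sq_sqrt (by positivity)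
  obtain ⟨I, hIdef⟩ : ∃ I : ℝ, (inner ℝ x y : ℝ) = I := ⟨_, rfl⟩
  have hI : ‖x + y‖ ^ 2 = ‖x‖ ^ 2 + 2 * I + ‖y‖ ^ 2 := by
    rw [norm_add_sq_real, hIdef]
  have hCS : I ≤ ‖x‖ * ‖y‖ := hIdef ▸ real_inner_le_norm x y
  have hkey : s ^ 2 + ‖x‖ * ‖y‖ ≤ a * b := by
    have h1 : (s ^ 2 + ‖x‖ * ‖y‖) ^ 2 ≤ (a * b) ^ 2 := by
      have := sq_nonneg (‖x‖ - ‖y‖)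
      nlinarith [norm_nonneg x, norm_nonneg y, hs.le]
    have h2 : 0 ≤ s ^ 2 + ‖x‖ * ‖y‖ := by positivity
    nlinarith [mul_nonneg ha0 hb0]
  have hE : (a + b) ^ 2 - ‖x + y‖ ^ 2 = 2 * s ^ 2 + 2 * (a * b - I) := by
    rw [hI]; nlinarith
  have hEge : (2 * s) ^ 2 ≤ (a + b) ^ 2 - ‖x + y‖ ^ 2 := by
    rw [hE]; nlinarith
  have hsqrt_ge : 2 * s ≤ Real.sqrt ((a + b) ^ 2 - ‖x + y‖ ^ 2) := by
    have := Real.sqrt_le_sqrt hEge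
    rwa [Real.sqrt_sq (by positivity)] at this
  have hds_xy := hds x y
  have h2s : (0:ℝ) < 2 * s := by positivity
  refine ⟨?_, ?_, ?_⟩
  · rw [hds_xy, ← ha, ← hb, sub_nonneg]
    calc (1:ℝ) = 1 / (2 * s) * (2 * s) := by field_simp
    _ ≤ _ := mul_le_mul_of_nonneg_left hsqrt_ge (by positivity)
  · rw [hds x y, hds y x, add_comm x y, add_comm (Real.sqrt (s ^ 2 + ‖x‖ ^ 2))]
  · rw [hds_xy, ← ha, ← hb]
    constructor
    · intro h
      have h1 : Real.sqrt ((a + b) ^ 2 - ‖x + y‖ ^ 2) = 2 * s := by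
        have h' : (1 / (2 * s)) * Real.sqrt ((a + b) ^ 2 - ‖x + y‖ ^ 2) = 1 := by linarith
        field_simp at h'
        linarith
      have hEeq : (a + b) ^ 2 - ‖x + y‖ ^ 2 = (2 * s) ^ 2 := by
        have h2 := congrArg (· ^ 2) h1
        rwa [Real.sq_sqrt (le_trans (by positivity) hEge)] at h2
      have hab : a * b = s ^ 2 + I := by
        rw [hE] at hEeq; linarith
      have heq : I = ‖x‖ * ‖y‖ := le_antisymm hCS (by linarith)
      have hnn : ‖x‖ = ‖y‖ := by
        have hsq : (s ^ 2 + ‖x‖ * ‖y‖) ^ 2 = (a * b) ^ 2 := by rw [hab, heq]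
        have hab2 : (a * b) ^ 2 = (s ^ 2 + ‖x‖ ^ 2) * (s ^ 2 + ‖y‖ ^ 2) := by
          rw [mul_pow, ha2, hb2]
        have h0 : s ^ 2 * (‖x‖ - ‖y‖) ^ 2 = 0 := by nlinarith [hsq, hab2]
        have h3 : (‖x‖ - ‖y‖) ^ 2 = 0 :=
          (mul_eq_zero.mp h0).resolve_left (by positivity : (0:ℝ) < s ^ 2).ne'
        nlinarith [h3]
      have hsub : ‖x - y‖ ^ 2 = 0 := by
        rw [norm_sub_sq_real, hIdef, heq, hnn]; ring
      have hxy : ‖x - y‖ = 0 := by nlinarith [norm_nonneg (x - y)]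
      exact sub_eq_zero.mp (norm_eq_zero.mp hxy)
    · rintro rfl
      have h1 : ‖x + x‖ ^ 2 = 4 * ‖x‖ ^ 2 := by
        rw [norm_add_sq_real, real_inner_self_eq_norm_sq]; ring
      have h2 : (a + a) ^ 2 - ‖x + x‖ ^ 2 = (2 * s) ^ 2 := by
        rw [h1]; nlinarith
      rw [h2, Real.sqrt_sq h2s.le]
      field_simp
      norm_num
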